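/- Let G be a finite p-group with |G'| ≥ p². Then G has at most one abelian maximal subgroup. -/

import Mathlib

/-- `G` is a minimal non-abelian group: non-abelian, but all proper subgroups abelian. -/
def IsMinimalNonabelian (G : Type*) [Group G] : Prop :=
  (¬ ∀ a b : G, a * b = b * a) ∧
    ∀ H : Subgroup G, H ≠ ⊤ → ∀ a ∈ H, ∀ b ∈ H, a * b = b * a

/-- `G` is an `𝒜_t`-group: it has a non-abelian subgroup of index `p ^ (t-1)`,
but all subgroups of index `p ^ t` are abelian. -/
def IsAGroup (p t : ℕ) (G : Type*) [Group G] : Prop :=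
  (∃ H : Subgroup G, H.index = p ^ (t - 1) ∧ ¬ ∀ a ∈ H, ∀ b ∈ H, a * b = b * a) ∧
    ∀ H : Subgroup G, H.index = p ^ t → ∀ a ∈ H, ∀ b ∈ H, a * b = b * a

open scoped Pointwise commutatorElement

section Helpers
variable {G : Type*} [Group G]

private lemma comm_key (g₁ g₂ h : G) :
    ⁅g₁ * g₂, h⁆ = g₁ * ⁅g₂, h⁆ * g₁⁻¹ * ⁅g₁, h⁆ := by
  simp only [commutatorElement_def]; group

private lemma comm_central_mul_left {z : G} (hz : z ∈ Subgroup.center G) (g h : G) :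
    ⁅z * g, h⁆ = ⁅g, h⁆ := by
  have h1 : ∀ x : G, x * z = z * x := fun x => Subgroup.mem_center_iff.mp hz x
  have hz1 : ⁅z, h⁆ = 1 := commutatorElement_eq_one_iff_mul_comm.mpr (h1 h).symm
  rw [comm_key, hz1, mul_one, show z * ⁅g, h⁆ = ⁅g, h⁆ * z from (h1 _).symm]
  group

private lemma comm_central_mul_right {z : G} (hz : z ∈ Subgroup.center G) (g h : G) :
    ⁅g, z * h⁆ = ⁅g, h⁆ := by
  rw [← commutatorElement_inv (z * h) g, comm_central_mul_left hz, commutatorElement_inv]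

private lemma comm_mul_left (hc : ∀ g h : G, ⁅g, h⁆ ∈ Subgroup.center G)
    (g₁ g₂ h : G) : ⁅g₁ * g₂, h⁆ = ⁅g₁, h⁆ * ⁅g₂, h⁆ := by
  have h2 : ∀ x : G, x * ⁅g₂, h⁆ = ⁅g₂, h⁆ * x :=
    fun x => Subgroup.mem_center_iff.mp (hc g₂ h) x
  have h1 : ∀ x : G, x * ⁅g₁, h⁆ = ⁅g₁, h⁆ * x :=
    fun x => Subgroup.mem_center_iff.mp (hc g₁ h) x
  have hconj : g₁ * ⁅g₂, h⁆ * g₁⁻¹ = ⁅g₂, h⁆ := by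
    rw [show g₁ * ⁅g₂, h⁆ = ⁅g₂, h⁆ * g₁ from h2 _]; group
  rw [comm_key, hconj]
  exact h1 _

private lemma comm_mul_right (hc : ∀ g h : G, ⁅g, h⁆ ∈ Subgroup.center G)
    (g h₁ h₂ : G) : ⁅g, h₁ * h₂⁆ = ⁅g, h₁⁆ * ⁅g, h₂⁆ := by
  have h2 : ∀ x : G, x * ⁅g, h₂⁆ = ⁅g, h₂⁆ * x :=
    fun x => Subgroup.mem_center_iff.mp (hc g h₂) x
  calc ⁅g, h₁ * h₂⁆ = ⁅h₁ * h₂, g⁆⁻¹ := (commutatorElement_inv (h₁ * h₂) g).symm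
    _ = (⁅h₁, g⁆ * ⁅h₂, g⁆)⁻¹ := by rw [comm_mul_left hc]
    _ = ⁅h₂, g⁆⁻¹ * ⁅h₁, g⁆⁻¹ := mul_inv_rev _ _
    _ = ⁅g, h₂⁆ * ⁅g, h₁⁆ := by rw [commutatorElement_inv, commutatorElement_inv]
    _ = ⁅g, h₁⁆ * ⁅g, h₂⁆ := (h2 _).symm

private lemma comm_inv_left (hc : ∀ g h : G, ⁅g, h⁆ ∈ Subgroup.center G)
    (g h : G) : ⁅g⁻¹, h⁆ = ⁅g, h⁆⁻¹ := by
  have key : ⁅g⁻¹ * g, h⁆ = ⁅g⁻¹, h⁆ * ⁅g, h⁆ := comm_mul_left hc _ _ _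
  rw [inv_mul_cancel] at key
  have h1 : ⁅(1 : G), h⁆ = 1 := by simp [commutatorElement_def]
  rw [h1] at key
  exact eq_inv_of_mul_eq_one_left key.symm

private lemma comm_zpow_left (hc : ∀ g h : G, ⁅g, h⁆ ∈ Subgroup.center G)
    (g h : G) (n : ℤ) : ⁅g ^ n, h⁆ = ⁅g, h⁆ ^ n := by
  induction n using Int.induction_on with
  | zero => simp [commutatorElement_def]
  | succ k ih => rw [zpow_add_one, comm_mul_left hc, ih, zpow_add_one]
  | pred k ih => rw [zpow_sub_one, comm_mul_left hc, ih, comm_inv_left hc, zpow_sub_one]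

private lemma comm_zpow_right (hc : ∀ g h : G, ⁅g, h⁆ ∈ Subgroup.center G)
    (g h : G) (n : ℤ) : ⁅g, h ^ n⁆ = ⁅g, h⁆ ^ n := by
  rw [← commutatorElement_inv (h ^ n) g, comm_zpow_left hc, ← inv_zpow, commutatorElement_inv]

/-- In a finite `p`-group, a maximal subgroup is normal of index `p`. -/
private lemma coatom_normal_index {p : ℕ} (hp : p.Prime) {G : Type*} [Group G] [Finite G]
    (hG : IsPGroup p G) {M : Subgroup G} (hM : IsCoatom M) : M.Normal ∧ M.index = p := by
  haveI : Fact p.Prime := ⟨hp⟩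
  haveI := hG.isNilpotent
  haveI hnormal : M.Normal :=
    Subgroup.NormalizerCondition.normal_of_coatom M (normalizerCondition_of_isNilpotent) hM
  refine ⟨hnormal, ?_⟩
  obtain ⟨n, hn⟩ := hG.index M
  have hn1 : n = 1 := by
    by_contra hne
    rcases Nat.lt_or_ge n 1 with h | h
    · interval_cases n
      exact hM.1 (Subgroup.index_eq_one.mp (by simpa using hn))
    · have h2 : 2 ≤ n := by omega
      have hcard : Nat.card (G ⧸ M) = p ^ n := by rw [← Subgroup.index_eq_card, hn]
      have hQ : IsPGroup p (G ⧸ M) := hG.to_quotient M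
      obtain ⟨g, hg⟩ := exists_prime_orderOf_dvd_card' p
        (by rw [hcard]; exact dvd_pow_self p (by omega))
      set Z := Subgroup.zpowers g with hZ
      set f := QuotientGroup.mk' M with hf
      have hsurj : Function.Surjective f := QuotientGroup.mk'_surjective M
      have hle : M ≤ Z.comap f := by
        intro x hx
        have hfx : f x = 1 := (QuotientGroup.eq_one_iff x).mpr hx
        rw [Subgroup.mem_comap, hfx]
        exact one_mem _
      obtain ⟨x, hx⟩ := hsurj g
      have hxmem : x ∈ Z.comap f := by
        rw [Subgroup.mem_comap, hx]
        exact Subgroup.mem_zpowers g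
      have hxM : x ∉ M := by
        intro hxM
        have hfx : f x = 1 := (QuotientGroup.eq_one_iff x).mpr hxM
        rw [hx] at hfx
        rw [hfx, orderOf_one] at hg
        exact hp.one_lt.ne hg
      have hlt : M < Z.comap f := lt_of_le_of_ne hle (fun e => hxM (e ▸ hxmem))
      have htop : Z.comap f = ⊤ := hM.2 _ hlt
      have hZtop : Z = ⊤ := by
        have := Subgroup.map_comap_eq_self_of_surjective hsurj Z
        rw [htop] at this
        rw [← this, Subgroup.map_top_of_surjective f hsurj]
      have hcZ : Nat.card Z = p := by rw [Nat.card_zpowers, hg]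
      rw [hZtop] at hcZ
      rw [Subgroup.card_top, hcard] at hcZ
      have := Nat.pow_right_injective hp.two_le (hcZ.trans (pow_one p).symm)
      omega
  rw [hn, hn1, pow_one]

end Helpers

theorem stmt14 {p : ℕ} (hp : p.Prime) {G : Type*} [Group G] [Finite G]
    (hG : IsPGroup p G) (hG' : p ^ 2 ≤ Nat.card (commutator G))
    {M₁ M₂ : Subgroup G} (h₁ : IsCoatom M₁) (h₂ : IsCoatom M₂)
    (hab₁ : ∀ a ∈ M₁, ∀ b ∈ M₁, a * b = b * a)
    (hab₂ : ∀ a ∈ M₂, ∀ b ∈ M₂, a * b = b * a) :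
    M₁ = M₂ := by
  haveI : Fact p.Prime := ⟨hp⟩
  by_contra hne
  obtain ⟨hnorm₁, hidx₁⟩ := coatom_normal_index hp hG h₁
  obtain ⟨hnorm₂, hidx₂⟩ := coatom_normal_index hp hG h₂
  haveI := hnorm₁
  haveI := hnorm₂
  have hns : ¬ M₂ ≤ M₁ := fun h =>
    h₁.1 (h₂.2 M₁ (h.lt_of_ne (fun e => hne e.symm)))
  have hns' : ¬ M₁ ≤ M₂ := fun h => h₂.1 (h₁.2 M₂ (h.lt_of_ne hne))
  have hsup : M₁ ⊔ M₂ = ⊤ := h₁.2 _ (left_lt_sup.mpr hns)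
  -- elements of M₁ ⊓ M₂ are central
  have hKc : ∀ z ∈ M₁ ⊓ M₂, z ∈ Subgroup.center G := by
    intro z hz
    rw [Subgroup.mem_center_iff]
    intro g
    have hcen : (⊤ : Subgroup G) ≤ Subgroup.centralizer {z} := by
      rw [← hsup]
      refine sup_le ?_ ?_
      · intro m hm
        rw [Subgroup.mem_centralizer_iff]
        intro w hw
        rw [Set.mem_singleton_iff] at hw
        rw [hw]
        exact hab₁ z hz.1 m hm
      · intro m hm
        rw [Subgroup.mem_centralizer_iff]
        intro w hw
        rw [Set.mem_singleton_iff] at hw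
        rw [hw]
        exact hab₂ z hz.2 m hm
    have := Subgroup.mem_centralizer_iff.mp (hcen (Subgroup.mem_top g)) z rfl
    exact this.symm ▸ this
  -- commutators lie in any normal subgroup of index p
  have hcommM : ∀ (M : Subgroup G), M.Normal → M.index = p → ∀ g h : G, ⁅g, h⁆ ∈ M := by
    intro M hnM hiM g h
    haveI := hnM
    haveI : IsCyclic (G ⧸ M) :=
      isCyclic_of_prime_card (p := p) (by rw [← Subgroup.index_eq_card, hiM])
    letI := IsCyclic.commGroup (α := G ⧸ M)
    have : (QuotientGroup.mk' M) ⁅g, h⁆ = 1 := by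
      rw [map_commutatorElement]
      exact commutatorElement_eq_one_iff_mul_comm.mpr (mul_comm _ _)
    exact (QuotientGroup.eq_one_iff _).mp this
  have hcent : ∀ g h : G, ⁅g, h⁆ ∈ Subgroup.center G := fun g h =>
    hKc _ ⟨hcommM M₁ hnorm₁ hidx₁ g h, hcommM M₂ hnorm₂ hidx₂ g h⟩
  obtain ⟨a, haM₁, haM₂⟩ := SetLike.not_le_iff_exists.mp hns'
  obtain ⟨b, hbM₂, hbM₁⟩ := SetLike.not_le_iff_exists.mp hns
  haveI hKnormal : (M₁ ⊓ M₂).Normal := inferInstance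
  -- M₁ = (M₁ ⊓ M₂) ⊔ zpowers a
  have hgen : ∀ (M N : Subgroup G), N.Normal → N.index = p → ∀ x ∈ M, x ∉ N →
      M ≤ (M ⊓ N) ⊔ Subgroup.zpowers x := by
    intro M N hnN hiN x hxM hxN
    haveI := hnN
    have hLM : (M ⊓ N) ⊔ Subgroup.zpowers x ≤ M :=
      sup_le inf_le_left (Subgroup.zpowers_le.mpr hxM)
    have hKL : M ⊓ N ≤ (M ⊓ N) ⊔ Subgroup.zpowers x := le_sup_left
    have hrel : (M ⊓ N).relIndex M = p := by
      have e1 : (M ⊓ N).relIndex M = N.relIndex M := Subgroup.inf_relIndex_left M N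
      have e2 : N.relIndex M ∣ p := hiN ▸ Subgroup.relIndex_dvd_index_of_normal N M
      have e3 : N.relIndex M ≠ 1 := fun e => hxN (Subgroup.relIndex_eq_one.mp e hxM)
      rcases hp.eq_one_or_self_of_dvd _ e2 with h | h
      · exact absurd h e3
      · rw [e1, h]
    have hmul : (M ⊓ N).relIndex ((M ⊓ N) ⊔ Subgroup.zpowers x) *
        ((M ⊓ N) ⊔ Subgroup.zpowers x).relIndex M = (M ⊓ N).relIndex M :=
      Subgroup.relIndex_mul_relIndex _ _ M hKL hLM
    have hKLne : (M ⊓ N).relIndex ((M ⊓ N) ⊔ Subgroup.zpowers x) ≠ 1 := fun e =>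
      hxN (Subgroup.relIndex_eq_one.mp e (Subgroup.mem_sup_right (Subgroup.mem_zpowers x))).2
    have hone : ((M ⊓ N) ⊔ Subgroup.zpowers x).relIndex M = 1 := by
      rcases hp.eq_one_or_self_of_dvd (((M ⊓ N) ⊔ Subgroup.zpowers x).relIndex M)
        ⟨(M ⊓ N).relIndex ((M ⊓ N) ⊔ Subgroup.zpowers x), by rw [← hrel, ← hmul, mul_comm]⟩
        with h | h
      · exact h
      · exfalso
        apply hKLne
        have hp' : (M ⊓ N).relIndex ((M ⊓ N) ⊔ Subgroup.zpowers x) * p = 1 * p := by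
          rw [one_mul]; rw [h, hrel] at hmul; exact hmul
        exact Nat.eq_of_mul_eq_mul_right hp.pos hp'
    exact Subgroup.relIndex_eq_one.mp hone
  have hM₁le : M₁ ≤ (M₁ ⊓ M₂) ⊔ Subgroup.zpowers a := hgen M₁ M₂ hnorm₂ hidx₂ a haM₁ haM₂
  have hM₂le : M₂ ≤ (M₂ ⊓ M₁) ⊔ Subgroup.zpowers b := hgen M₂ M₁ hnorm₁ hidx₁ b hbM₂ hbM₁
  set c := ⁅a, b⁆ with hc
  -- pairs
  have hpair : ∀ m₁ ∈ M₁, ∀ m₂ ∈ M₂, ⁅m₁, m₂⁆ ∈ Subgroup.zpowers c := by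
    intro m₁ hm₁ m₂ hm₂
    have hm₁' : m₁ ∈ (((M₁ ⊓ M₂ : Subgroup G) : Set G) * ((Subgroup.zpowers a : Subgroup G) : Set G)) := by
      rw [← Subgroup.normal_mul]
      exact hM₁le hm₁
    have hm₂' : m₂ ∈ (((M₂ ⊓ M₁ : Subgroup G) : Set G) * ((Subgroup.zpowers b : Subgroup G) : Set G)) := by
      rw [← Subgroup.normal_mul]
      exact hM₂le hm₂
    obtain ⟨z, hz, xa, hxa, hzx⟩ := Set.mem_mul.mp hm₁'
    obtain ⟨w, hw, yb, hyb, hwy⟩ := Set.mem_mul.mp hm₂'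
    obtain ⟨i, hi⟩ := Subgroup.mem_zpowers_iff.mp hxa
    obtain ⟨j, hj⟩ := Subgroup.mem_zpowers_iff.mp hyb
    have hzc : z ∈ Subgroup.center G := hKc z hz
    have hwc : w ∈ Subgroup.center G := hKc w ⟨hw.2, hw.1⟩
    have : ⁅m₁, m₂⁆ = c ^ (j * i) := by
      rw [← hzx, ← hwy, comm_central_mul_left hzc, comm_central_mul_right hwc,
        ← hi, ← hj, comm_zpow_left hcent, comm_zpow_right hcent, ← zpow_mul]
    rw [this]
    exact Subgroup.zpow_mem _ (Subgroup.mem_zpowers c) _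
  -- commutator subgroup is contained in zpowers c
  have hcomm_le : commutator G ≤ Subgroup.zpowers c := by
    rw [commutator_def, Subgroup.commutator_le]
    intro g _ h _
    have hg : g ∈ ((M₁ : Set G) * (M₂ : Set G)) := by
      rw [← Subgroup.normal_mul, hsup, Subgroup.coe_top]
      exact Set.mem_univ g
    have hh : h ∈ ((M₁ : Set G) * (M₂ : Set G)) := by
      rw [← Subgroup.normal_mul, hsup, Subgroup.coe_top]
      exact Set.mem_univ h
    obtain ⟨x, hx, y, hy, rfl⟩ := Set.mem_mul.mp hg
    obtain ⟨u, hu, v, hv, rfl⟩ := Set.mem_mul.mp hh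
    rw [comm_mul_left hcent, comm_mul_right hcent, comm_mul_right hcent]
    refine mul_mem (mul_mem ?_ ?_) (mul_mem ?_ ?_)
    · rw [commutatorElement_eq_one_iff_mul_comm.mpr (hab₁ x hx u hu)]
      exact one_mem _
    · exact hpair x hx v hv
    · rw [← commutatorElement_inv u y]
      exact inv_mem (hpair u hu y hy)
    · rw [commutatorElement_eq_one_iff_mul_comm.mpr (hab₂ y hy v hv)]
      exact one_mem _
  -- c ^ p = 1
  have hap : a ^ p ∈ M₂ := by rw [← hidx₂]; exact M₂.pow_index_mem a
  have hcp : c ^ p = 1 := by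
    have h1 : ⁅a ^ p, b⁆ = 1 :=
      commutatorElement_eq_one_iff_mul_comm.mpr (hab₂ _ hap _ hbM₂)
    calc c ^ p = c ^ (p : ℤ) := (zpow_natCast c p).symm
      _ = ⁅a ^ (p : ℤ), b⁆ := (comm_zpow_left hcent a b p).symm
      _ = ⁅a ^ p, b⁆ := by rw [zpow_natCast]
      _ = 1 := h1
  have hord : orderOf c ∣ p := orderOf_dvd_of_pow_eq_one hcp
  have hcard : Nat.card (commutator G) ≤ p := by
    have h1 : Nat.card (commutator G) ≤ Nat.card (Subgroup.zpowers c) :=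
      Subgroup.card_le_of_le hcomm_le
    rw [Nat.card_zpowers] at h1
    exact h1.trans (Nat.le_of_dvd hp.pos hord)
  have h2 : p ^ 2 ≤ p := hG'.trans hcard
  have h3 : p * p ≤ p * 1 := by rw [mul_one]; simpa [pow_two] using h2
  have h4 : p ≤ 1 := Nat.le_of_mul_le_mul_left h3 hp.pos
  have h5 := hp.two_le
  omega
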